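/- Let G be a generalized Hadamard matrix (G·conj(G)ᵀ = q·I_q) with symmetric core, first row all 1, and first column entries -1 below the top entry. Then for all p,t ∈ V(n,q): Σ_{s ∈ V(n,q)} (-1)^{s_0} · MG(p;s) · conj(MG(s;t)) = (-1)^{t_0} · qⁿ · δ_{p,t}. -/

import Mathlib

open Finset

/-- `V n q` is the set of weak compositions of `n` into `q` parts. -/
def V (n q : ℕ) : Finset (Fin q → ℕ) :=
  (Fintype.piFinset fun _ : Fin q => Finset.range (n + 1)).filter fun p => ∑ i, p i = n

open scoped Classical in
/-- The m-polynomial `MG(p; s)` with respect to the matrix `G`. -/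
noncomputable def MG {q : ℕ} (n : ℕ) (G : Matrix (Fin q) (Fin q) ℂ)
    (p s : Fin q → ℕ) : ℂ :=
  ∑ r ∈ (Fintype.piFinset fun _ : Fin q => Fintype.piFinset fun _ : Fin q =>
      Finset.range (n + 1)).filter
      (fun r => (∀ i, ∑ j, r i j = s i) ∧ (∀ j, ∑ i, r i j = p j)),
    ((∏ i, Nat.factorial (s i) : ℕ) : ℂ) / ((∏ i, ∏ j, Nat.factorial (r i j) : ℕ) : ℂ) *
      ∏ i, ∏ j, G i j ^ r i j

open scoped Classical in
lemma MG_eq {q : ℕ} (n : ℕ) (A : Matrix (Fin q) (Fin q) ℂ) (p s : Fin q → ℕ)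
    (hs : ∑ i, s i = n) :
    MG n A p s = ∑ r ∈ (Fintype.piFinset fun i : Fin q =>
        Finset.piAntidiag Finset.univ (s i)).filter (fun r => ∀ j, ∑ i, r i j = p j),
      (∏ i, (Nat.multinomial Finset.univ (r i) : ℂ)) * ∏ i, ∏ j, A i j ^ r i j := by
  rw [MG]
  refine Finset.sum_congr ?_ fun r hr => ?_
  · ext r
    simp only [Finset.mem_filter, Fintype.mem_piFinset, Finset.mem_range,
      Finset.mem_piAntidiag, Finset.mem_univ, implies_true, and_true]
    constructor
    · rintro ⟨-, hrow, hcol⟩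
      exact ⟨fun i => hrow i, hcol⟩
    · rintro ⟨hrow, hcol⟩
      refine ⟨fun i j => ?_, fun i => hrow i, hcol⟩
      have h1 : r i j ≤ ∑ j, r i j := Finset.single_le_sum (fun _ _ => Nat.zero_le _) (Finset.mem_univ j)
      have h2 : s i ≤ ∑ i, s i := Finset.single_le_sum (fun _ _ => Nat.zero_le _) (Finset.mem_univ i)
      rw [hrow i] at h1
      omega
  · simp only [Finset.mem_filter, Fintype.mem_piFinset, Finset.mem_piAntidiag] at hr
    have hrow : ∀ i, ∑ j, r i j = s i := fun i => (hr.1 i).1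
    congr 1
    have key : ∀ i, ((s i).factorial : ℂ) =
        ((∏ j, (r i j).factorial : ℕ) : ℂ) * (Nat.multinomial Finset.univ (r i) : ℂ) := by
      intro i
      rw [← Nat.cast_mul, Nat.multinomial_spec, hrow i]
    rw [div_eq_iff]
    · push_cast
      rw [← Finset.prod_mul_distrib]
      rw [Finset.prod_congr rfl fun i _ => key i, Finset.prod_mul_distrib]
      push_cast
      rw [Finset.prod_mul_distrib]
      ring
    · have : (0:ℕ) < ∏ i, ∏ j, (r i j).factorial :=
        Finset.prod_pos fun i _ => Finset.prod_pos fun j _ => Nat.factorial_pos _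
      exact_mod_cast this.ne'

open MvPolynomial in
noncomputable def PP (q : ℕ) (A : Matrix (Fin q) (Fin q) ℂ) (s : Fin q → ℕ) :
    MvPolynomial (Fin q) ℂ :=
  ∏ i, (∑ j, C (A i j) * X j) ^ s i

open MvPolynomial in
lemma prod_X_pow {q : ℕ} (p : Fin q → ℕ) :
    ∏ j, (X j : MvPolynomial (Fin q) ℂ) ^ p j =
      monomial (Finsupp.equivFunOnFinite.symm p) 1 := by
  rw [← MvPolynomial.prod_X_pow_eq_monomial]
  refine (Finset.prod_subset (Finset.subset_univ _) fun x _ hx => ?_).symm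
  have h0 : p x = 0 := by simpa using Finsupp.notMem_support_iff.mp hx
  rw [h0, pow_zero]

open MvPolynomial in
lemma PP_eq {q : ℕ} (n : ℕ) (A : Matrix (Fin q) (Fin q) ℂ) (s : Fin q → ℕ)
    (hs : ∑ i, s i = n) :
    PP q A s = ∑ p ∈ V n q, C (MG n A p s) * ∏ j, X j ^ p j := by
  classical
  unfold PP
  simp_rw [Finset.sum_pow_eq_sum_piAntidiag]
  rw [Finset.prod_univ_sum]
  have hmaps : ∀ r ∈ Fintype.piFinset fun i : Fin q => Finset.piAntidiag Finset.univ (s i),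
      (fun j => ∑ i, r i j) ∈ V n q := by
    intro r hr
    simp only [Fintype.mem_piFinset, Finset.mem_piAntidiag] at hr
    have htot : ∑ j, ∑ i, r i j = n := by
      rw [Finset.sum_comm]
      rw [Finset.sum_congr rfl fun i _ => (hr i).1]
      exact hs
    simp only [V, Finset.mem_filter, Fintype.mem_piFinset, Finset.mem_range]
    refine ⟨fun j => ?_, htot⟩
    have : (∑ i, r i j) ≤ ∑ j, ∑ i, r i j :=
      Finset.single_le_sum (f := fun j => ∑ i, r i j) (fun _ _ => Nat.zero_le _)
        (Finset.mem_univ j)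
    omega
  rw [← Finset.sum_fiberwise_of_maps_to hmaps]
  refine Finset.sum_congr rfl fun p hp => ?_
  rw [MG_eq n A p s hs, map_sum, Finset.sum_mul]
  refine Finset.sum_congr ?_ fun r hr => ?_
  · ext r
    simp [_root_.funext_iff]
  · simp only [Finset.mem_filter, Fintype.mem_piFinset, Finset.mem_piAntidiag] at hr
    have hcol : ∀ j, ∑ i, r i j = p j := hr.2
    simp_rw [mul_pow, Finset.prod_mul_distrib]
    rw [Finset.prod_comm (f := fun i j => (X j : MvPolynomial (Fin q) ℂ) ^ r i j)]
    simp_rw [Finset.prod_pow_eq_pow_sum, hcol]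
    rw [map_mul, map_prod]
    simp_rw [map_natCast (C : ℂ →+* MvPolynomial (Fin q) ℂ)]
    rw [map_prod]
    simp_rw [map_prod, map_pow]
    ring

open MvPolynomial in
lemma coeff_extract {q : ℕ} (n : ℕ) (p : Fin q → ℕ) (hp : p ∈ V n q)
    (c : (Fin q → ℕ) → ℂ) :
    coeff (Finsupp.equivFunOnFinite.symm p)
      (∑ p' ∈ V n q, C (c p') * ∏ j, X j ^ p' j) = c p := by
  classical
  simp_rw [prod_X_pow, coeff_sum, coeff_C_mul, coeff_monomial, EmbeddingLike.apply_eq_iff_eq,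
    mul_ite, mul_one, mul_zero]
  rw [Finset.sum_ite_eq' (V n q) p c] at *
  simp [hp]

open MvPolynomial in
lemma coeff_PP {q : ℕ} (n : ℕ) (A : Matrix (Fin q) (Fin q) ℂ) (s p : Fin q → ℕ)
    (hs : ∑ i, s i = n) (hp : p ∈ V n q) :
    coeff (Finsupp.equivFunOnFinite.symm p) (PP q A s) = MG n A p s := by
  rw [PP_eq n A s hs, coeff_extract n p hp]

open MvPolynomial in
lemma MG_comp {q : ℕ} (n : ℕ) (A B : Matrix (Fin q) (Fin q) ℂ) (p t : Fin q → ℕ)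
    (ht : ∑ i, t i = n) (hp : p ∈ V n q) :
    ∑ s ∈ V n q, MG n A p s * MG n B s t = MG n (B * A) p t := by
  classical
  set Y : Fin q → MvPolynomial (Fin q) ℂ := fun j => ∑ k, C (A j k) * X k with hY
  have hrowB : ∀ i, (aeval Y : MvPolynomial (Fin q) ℂ →ₐ[ℂ] MvPolynomial (Fin q) ℂ)
      (∑ j, C (B i j) * X j) = ∑ k, C ((B * A) i k) * X k := by
    intro i
    rw [map_sum]
    simp_rw [map_mul, aeval_C, aeval_X, algebraMap_eq, hY]
    simp_rw [Finset.mul_sum]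
    rw [Finset.sum_comm]
    refine Finset.sum_congr rfl fun k _ => ?_
    rw [Matrix.mul_apply, map_sum, Finset.sum_mul]
    refine Finset.sum_congr rfl fun j _ => ?_
    rw [map_mul]
    ring
  have key : PP q (B * A) t = ∑ s ∈ V n q, C (MG n B s t) * PP q A s := by
    have h1 : PP q (B * A) t = aeval Y (PP q B t) := by
      unfold PP
      rw [map_prod]
      simp_rw [map_pow, hrowB]
    rw [h1, PP_eq n B t ht, map_sum]
    refine Finset.sum_congr rfl fun s _ => ?_
    rw [map_mul, aeval_C, algebraMap_eq, map_prod]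
    simp_rw [map_pow, aeval_X]
    rfl
  have h2 := congrArg (coeff (Finsupp.equivFunOnFinite.symm p)) key
  rw [coeff_PP n (B * A) t p ht hp, coeff_sum] at h2
  rw [h2]
  refine Finset.sum_congr rfl fun s hs => ?_
  have hsn : ∑ i, s i = n := by
    simp only [V, Finset.mem_filter] at hs; exact hs.2
  rw [coeff_C_mul, coeff_PP n A s p hsn hp, mul_comm]

lemma MG_diagonal {q : ℕ} (n : ℕ) (d : Fin q → ℂ) (p t : Fin q → ℕ)
    (hp : p ∈ V n q) (ht : t ∈ V n q) :
    MG n (Matrix.diagonal d) p t = if p = t then ∏ i, d i ^ t i else 0 := by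
  classical
  rw [MG]
  set r₀ : Fin q → Fin q → ℕ := fun i j => if i = j then t i else 0 with hr₀
  have hzero : ∀ r : Fin q → Fin q → ℕ, (∃ i j, i ≠ j ∧ r i j ≠ 0) →
      ((∏ i, Nat.factorial (t i) : ℕ) : ℂ) / ((∏ i, ∏ j, Nat.factorial (r i j) : ℕ) : ℂ) *
        ∏ i, ∏ j, Matrix.diagonal d i j ^ r i j = 0 := by
    rintro r ⟨i, j, hij, hr⟩
    have : Matrix.diagonal d i j ^ r i j = 0 := by
      rw [Matrix.diagonal_apply_ne d hij, zero_pow hr]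
    have hz2 : ∏ i, ∏ j, Matrix.diagonal d i j ^ r i j = 0 :=
      Finset.prod_eq_zero (Finset.mem_univ i) (Finset.prod_eq_zero (Finset.mem_univ j) this)
    rw [hz2, mul_zero]
  have hdiag : ∀ r : Fin q → Fin q → ℕ, ((∀ i, ∑ j, r i j = t i) ∧ (∀ j, ∑ i, r i j = p j)) →
      (∀ i j, i ≠ j → r i j = 0) → p = t ∧ r = r₀ := by
    rintro r ⟨hrow, hcol⟩ h
    have hrd : ∀ i, r i i = t i := by
      intro i
      rw [← hrow i, Finset.sum_eq_single i (fun b _ hb => h i b fun he => hb he.symm)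
        (fun hb => absurd (Finset.mem_univ i) hb)]
    have hpd : ∀ j, p j = t j := by
      intro j
      rw [← hcol j, Finset.sum_eq_single j (fun b _ hb => h b j hb)
        (fun hb => absurd (Finset.mem_univ j) hb), hrd j]
    refine ⟨funext hpd, funext fun i => funext fun j => ?_⟩
    by_cases hij : i = j
    · subst hij; simp [hr₀, hrd i]
    · simp [hr₀, hij, h i j hij]
  by_cases hpt : p = t
  · subst hpt
    rw [if_pos rfl]
    have htmem : ∀ i, p i < n + 1 := by
      intro i
      have := (Finset.mem_filter.mp ht).1
      rw [Fintype.mem_piFinset] at this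
      simpa using this i
    have hmem : r₀ ∈ (Fintype.piFinset fun _ : Fin q => Fintype.piFinset fun _ : Fin q =>
        Finset.range (n + 1)).filter
        (fun r => (∀ i, ∑ j, r i j = p i) ∧ (∀ j, ∑ i, r i j = p j)) := by
      simp only [Finset.mem_filter, Fintype.mem_piFinset, Finset.mem_range]
      refine ⟨fun i j => ?_, fun i => ?_, fun j => ?_⟩
      · by_cases hij : i = j
        · simp [hr₀, hij, htmem j]
        · simp [hr₀, hij]
      · simp [hr₀]
      · simp [hr₀]
    rw [Finset.sum_eq_single_of_mem r₀ hmem]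
    · have h1 : (∏ i, ∏ j, Nat.factorial (r₀ i j) : ℕ) = ∏ i, Nat.factorial (p i) := by
        refine Finset.prod_congr rfl fun i _ => ?_
        rw [Finset.prod_eq_single i (fun b _ hb => by simp [hr₀, (Ne.symm hb : ¬ i = b)])
          (fun hb => absurd (Finset.mem_univ i) hb)]
        simp [hr₀]
      have h2 : ∏ i, ∏ j, Matrix.diagonal d i j ^ r₀ i j = ∏ i, d i ^ p i := by
        refine Finset.prod_congr rfl fun i _ => ?_
        rw [Finset.prod_eq_single i (fun b _ hb => by simp [hr₀, (Ne.symm hb : ¬ i = b)])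
          (fun hb => absurd (Finset.mem_univ i) hb)]
        simp [hr₀]
      rw [h1, h2, div_self, one_mul]
      have : (0:ℕ) < ∏ i, Nat.factorial (p i) :=
        Finset.prod_pos fun i _ => Nat.factorial_pos _
      exact_mod_cast this.ne'
    · intro r hr hne
      rw [Finset.mem_filter] at hr
      by_cases h : ∀ i j, i ≠ j → r i j = 0
      · exact absurd (hdiag r hr.2 h).2 hne
      · push_neg at h
        obtain ⟨i, j, hij, hnz⟩ := h
        exact hzero r ⟨i, j, hij, hnz⟩
  · rw [if_neg hpt]
    refine Finset.sum_eq_zero fun r hr => ?_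
    rw [Finset.mem_filter] at hr
    by_cases h : ∀ i j, i ≠ j → r i j = 0
    · exact absurd (hdiag r hr.2 h).1 hpt
    · push_neg at h
      obtain ⟨i, j, hij, hnz⟩ := h
      exact hzero r ⟨i, j, hij, hnz⟩

lemma MG_conj_sign {q : ℕ} [NeZero q] (n : ℕ) (G : Matrix (Fin q) (Fin q) ℂ)
    (s t : Fin q → ℕ) :
    (-1 : ℂ) ^ (s 0) * (starRingEnd ℂ) (MG n G s t) =
      MG n (Matrix.of fun i j => (if j = (0 : Fin q) then (-1 : ℂ) else 1) *
        (starRingEnd ℂ) (G i j)) s t := by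
  classical
  rw [MG, MG, map_sum, Finset.mul_sum]
  refine Finset.sum_congr rfl fun r hr => ?_
  have hcol0 : ∑ i, r i 0 = s 0 := by
    rw [Finset.mem_filter] at hr
    exact hr.2.2 0
  rw [map_mul, map_div₀, map_natCast, map_natCast, map_prod]
  simp_rw [map_prod, map_pow]
  have h1 : ∀ i j, ((Matrix.of fun i j => (if j = (0 : Fin q) then (-1 : ℂ) else 1) *
      (starRingEnd ℂ) (G i j)) i j) ^ r i j =
      (if j = (0 : Fin q) then (-1 : ℂ) else 1) ^ r i j * ((starRingEnd ℂ) (G i j)) ^ r i j :=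
    fun i j => mul_pow _ _ _
  simp_rw [h1, Finset.prod_mul_distrib]
  have h2 : ∀ i, ∏ j, (if j = (0 : Fin q) then (-1 : ℂ) else 1) ^ r i j = (-1 : ℂ) ^ r i 0 := by
    intro i
    rw [Finset.prod_eq_single 0 (fun b _ hb => by rw [if_neg hb, one_pow])
      (fun hb => absurd (Finset.mem_univ _) hb), if_pos rfl]
  simp_rw [h2]
  rw [Finset.prod_pow_eq_pow_sum, hcol0]
  ring

lemma BG_eq {q : ℕ} [NeZero q] (G : Matrix (Fin q) (Fin q) ℂ)
    (hG : G * G.conjTranspose = (q : ℂ) • 1)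
    (hrow : ∀ j, G 0 j = 1) (hcol : ∀ i, i ≠ 0 → G i 0 = -1)
    (hcore : ∀ i j, i ≠ 0 → j ≠ 0 → G i j = G j i) :
    (Matrix.of fun i j => (if j = (0 : Fin q) then (-1 : ℂ) else 1) *
      (starRingEnd ℂ) (G i j)) * G =
      Matrix.diagonal (fun i => (q : ℂ) * (if i = 0 then -1 else 1)) := by
  classical
  have hq0 : (q : ℂ) ≠ 0 := Nat.cast_ne_zero.mpr (NeZero.ne q)
  have h1 : G * ((q : ℂ)⁻¹ • G.conjTranspose) = 1 := by
    rw [Matrix.mul_smul, hG, smul_smul, inv_mul_cancel₀ hq0, one_smul]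
  have h2 : ((q : ℂ)⁻¹ • G.conjTranspose) * G = 1 := mul_eq_one_comm.mp h1
  have h3 : G.conjTranspose * G = (q : ℂ) • 1 := by
    have := congrArg (fun M => (q : ℂ) • M) h2
    simpa [Matrix.smul_mul, smul_smul, mul_inv_cancel₀ hq0] using this
  have hG' : ∀ i k, ∑ j, (starRingEnd ℂ) (G j i) * G j k = if i = k then (q : ℂ) else 0 := by
    intro i k
    have := congrFun (congrFun h3 i) k
    simpa [Matrix.mul_apply, Matrix.conjTranspose_apply, Matrix.smul_apply, Matrix.one_apply,
      mul_ite, mul_one, mul_zero] using this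
  ext i k
  rw [Matrix.mul_apply, Matrix.diagonal_apply]
  by_cases hi : i = 0
  · subst hi
    have key : ∀ j, (Matrix.of fun i j => (if j = (0 : Fin q) then (-1 : ℂ) else 1) *
        (starRingEnd ℂ) (G i j)) 0 j * G j k = -((starRingEnd ℂ) (G j 0) * G j k) := by
      intro j
      by_cases hj : j = 0
      · subst hj
        simp [hrow 0]
      · simp only [Matrix.of_apply, if_neg hj, hrow j, hcol j hj, map_one, map_neg, one_mul]
        ring
    rw [Finset.sum_congr rfl fun j _ => key j, Finset.sum_neg_distrib, hG' 0 k]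
    by_cases hk : (0 : Fin q) = k
    · rw [if_pos hk, if_pos hk, if_pos rfl]; ring
    · rw [if_neg hk, if_neg hk, neg_zero]
  · have key : ∀ j, (Matrix.of fun i j => (if j = (0 : Fin q) then (-1 : ℂ) else 1) *
        (starRingEnd ℂ) (G i j)) i j * G j k = (starRingEnd ℂ) (G j i) * G j k := by
      intro j
      by_cases hj : j = 0
      · subst hj
        simp only [Matrix.of_apply, hcol i hi, hrow, map_neg, map_one, if_pos]
        simp
      · simp only [Matrix.of_apply, if_neg hj, hcore i j hi hj, one_mul]
    rw [Finset.sum_congr rfl fun j _ => key j, hG' i k]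
    by_cases hk : i = k
    · rw [if_pos hk, if_pos hk, if_neg hi]; ring
    · rw [if_neg hk, if_neg hk]

theorem stmt6 (q n : ℕ) [NeZero q] (hq : 2 ≤ q) (hn : 0 < n)
    (G : Matrix (Fin q) (Fin q) ℂ) (hG : G * G.conjTranspose = (q : ℂ) • 1)
    (hrow : ∀ j, G 0 j = 1) (hcol : ∀ i, i ≠ 0 → G i 0 = -1)
    (hcore : ∀ i j, i ≠ 0 → j ≠ 0 → G i j = G j i)
    (p t : Fin q → ℕ) (hp : p ∈ V n q) (ht : t ∈ V n q) :
    ∑ s ∈ V n q, (-1 : ℂ) ^ (s 0) * MG n G p s * (starRingEnd ℂ) (MG n G s t) =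
      (-1 : ℂ) ^ (t 0) * (q : ℂ) ^ n * (if p = t then 1 else 0) := by
  classical
  have htn : ∑ i, t i = n := by
    have := Finset.mem_filter.mp ht
    exact this.2
  have step1 : ∀ s : Fin q → ℕ, (-1 : ℂ) ^ (s 0) * MG n G p s * (starRingEnd ℂ) (MG n G s t) =
      MG n G p s * MG n (Matrix.of fun i j => (if j = (0 : Fin q) then (-1 : ℂ) else 1) *
        (starRingEnd ℂ) (G i j)) s t := by
    intro s
    rw [← MG_conj_sign n G s t]
    ring
  rw [Finset.sum_congr rfl fun s _ => step1 s,
    MG_comp n G _ p t htn hp, BG_eq G hG hrow hcol hcore,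
    MG_diagonal n _ p t hp ht]
  by_cases hpt : p = t
  · rw [if_pos hpt, if_pos hpt, mul_one]
    have h1 : ∀ i : Fin q, ((q : ℂ) * (if i = 0 then -1 else 1)) ^ t i =
        (q : ℂ) ^ t i * (if i = 0 then (-1 : ℂ) else 1) ^ t i := fun i => mul_pow _ _ _
    rw [Finset.prod_congr rfl fun i _ => h1 i, Finset.prod_mul_distrib,
      Finset.prod_pow_eq_pow_sum, htn]
    have h2 : ∏ i, (if i = (0 : Fin q) then (-1 : ℂ) else 1) ^ t i = (-1 : ℂ) ^ t 0 := by
      rw [Finset.prod_eq_single 0 (fun b _ hb => by rw [if_neg hb, one_pow])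
        (fun hb => absurd (Finset.mem_univ _) hb), if_pos rfl]
    rw [h2]
    ring
  · rw [if_neg hpt, if_neg hpt, mul_zero]
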